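/- arXiv:2311.05977 — 7 statements merged into one kernel-verified Lean document; each statement's English description precedes it below -/
import Mathlib

section
/- Suppose the liquidation functions satisfy γ-monotonicity and the inverse demand function F satisfies F-monotonicity. Then the clearing map Φ is monotone: for all (p¹,q¹,M¹), (p²,q²,M²) ∈ [0,p̄] × ℝ^m_+ × ℝ^n_+ with (p¹,q¹,M¹) ≥ (p²,q²,M²) componentwise, Φ(p¹,q¹,M¹) ≥ Φ(p²,q²,M²) componentwise. -/
open Finset

/-- Transpose-multiplication: `(A^T p)_i = ∑_j A_{ji} p_j`. -/
noncomputable def ATmul {n : ℕ} (A : Matrix (Fin n) (Fin n) ℝ) (p : Fin n → ℝ) : Fin n → ℝ :=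
  fun i => ∑ j, A j i * p j

/-- The clearing map `Φ(p,q,M) = (p̄ ∧ (x + S q + A^T p), F(∑_i γ_i(p,q), M), (x + A^T p − p̄)^+)`. -/
noncomputable def clearingMap {n m : ℕ} (x : Fin n → ℝ) (S : Matrix (Fin n) (Fin m) ℝ)
    (A : Matrix (Fin n) (Fin n) ℝ) (pbar : Fin n → ℝ)
    (γ : Fin n → (Fin n → ℝ) → (Fin m → ℝ) → (Fin m → ℝ))
    (F : (Fin m → ℝ) → (Fin n → ℝ) → (Fin m → ℝ))
    (p : Fin n → ℝ) (q : Fin m → ℝ) (M : Fin n → ℝ) :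
    (Fin n → ℝ) × (Fin m → ℝ) × (Fin n → ℝ) :=
  (fun i => min (pbar i) (x i + (∑ k, S i k * q k) + ATmul A p i),
   F (fun k => ∑ i, γ i p q k) M,
   fun i => max (x i + ATmul A p i - pbar i) 0)

/-- The maximal market liquidity `M̄ = (x + A^T p̄ − p̄)^+`. -/
noncomputable def Mbar {n : ℕ} (x : Fin n → ℝ) (A : Matrix (Fin n) (Fin n) ℝ)
    (pbar : Fin n → ℝ) : Fin n → ℝ :=
  fun i => max (x i + ATmul A pbar i - pbar i) 0

/-- Under γ-monotonicity and F-monotonicity, the clearing map `Φ` is monotone on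
`[0,p̄] × ℝ^m_+ × ℝ^n_+` with respect to the componentwise order. -/
theorem stmt2 {n m : ℕ} (hn : 1 ≤ n) (hm : 1 ≤ m)
    (x : Fin n → ℝ) (hx : ∀ i, 0 ≤ x i)
    (S : Matrix (Fin n) (Fin m) ℝ) (hS : ∀ i k, 0 ≤ S i k)
    (A : Matrix (Fin n) (Fin n) ℝ) (hA : ∀ i j, 0 ≤ A i j ∧ A i j ≤ 1)
    (pbar : Fin n → ℝ) (hpbar : ∀ i, 0 ≤ pbar i)
    (γ : Fin n → (Fin n → ℝ) → (Fin m → ℝ) → (Fin m → ℝ))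
    (hγrange : ∀ i p q, (∀ j, 0 ≤ p j ∧ p j ≤ pbar j) → (∀ k, 0 ≤ q k) →
      ∀ k, 0 ≤ γ i p q k ∧ γ i p q k ≤ S i k)
    (hγmono : ∀ i p₁ p₂ q₁ q₂, (∀ j, 0 ≤ p₂ j) → (∀ j, p₂ j ≤ p₁ j) → (∀ j, p₁ j ≤ pbar j) →
      (∀ k, 0 ≤ q₂ k) → (∀ k, q₂ k ≤ q₁ k) → ∀ k, γ i p₁ q₁ k ≤ γ i p₂ q₂ k)
    (F : (Fin m → ℝ) → (Fin n → ℝ) → (Fin m → ℝ))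
    (hFθ : ∀ θ₁ θ₂ M, (∀ k, 0 ≤ θ₂ k) → (∀ k, θ₂ k ≤ θ₁ k) → (∀ i, 0 ≤ M i) →
      ∀ k, F θ₁ M k ≤ F θ₂ M k)
    (hFM : ∀ θ M₁ M₂, (∀ k, 0 ≤ θ k) → (∀ i, 0 ≤ M₁ i) → (∀ i, M₁ i ≤ M₂ i) →
      ∀ k, F θ M₁ k ≤ F θ M₂ k)
    (p₁ p₂ : Fin n → ℝ) (q₁ q₂ : Fin m → ℝ) (M₁ M₂ : Fin n → ℝ)
    (hp₁ : ∀ i, 0 ≤ p₁ i ∧ p₁ i ≤ pbar i) (hq₁ : ∀ k, 0 ≤ q₁ k) (hM₁ : ∀ i, 0 ≤ M₁ i)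
    (hp₂ : ∀ i, 0 ≤ p₂ i ∧ p₂ i ≤ pbar i) (hq₂ : ∀ k, 0 ≤ q₂ k) (hM₂ : ∀ i, 0 ≤ M₂ i)
    (hp : ∀ i, p₂ i ≤ p₁ i) (hq : ∀ k, q₂ k ≤ q₁ k) (hM : ∀ i, M₂ i ≤ M₁ i) :
    (∀ i, (clearingMap x S A pbar γ F p₂ q₂ M₂).1 i ≤ (clearingMap x S A pbar γ F p₁ q₁ M₁).1 i) ∧
    (∀ k, (clearingMap x S A pbar γ F p₂ q₂ M₂).2.1 k ≤ (clearingMap x S A pbar γ F p₁ q₁ M₁).2.1 k) ∧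
    (∀ i, (clearingMap x S A pbar γ F p₂ q₂ M₂).2.2 i ≤ (clearingMap x S A pbar γ F p₁ q₁ M₁).2.2 i) := by
  have hAT : ∀ i, ATmul A p₂ i ≤ ATmul A p₁ i := fun i =>
    Finset.sum_le_sum fun j _ => mul_le_mul_of_nonneg_left (hp j) (hA j i).1
  refine ⟨fun i => ?_, fun k => ?_, fun i => ?_⟩
  · simp only [clearingMap]
    exact min_le_min le_rfl (by
      have : ∑ k, S i k * q₂ k ≤ ∑ k, S i k * q₁ k :=
        Finset.sum_le_sum fun k _ => mul_le_mul_of_nonneg_left (hq k) (hS i k)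
      linarith [hAT i])
  · simp only [clearingMap]
    calc F (fun k => ∑ i, γ i p₂ q₂ k) M₂ k
        ≤ F (fun k => ∑ i, γ i p₂ q₂ k) M₁ k := by
          exact hFM _ _ _ (fun k => Finset.sum_nonneg fun i _ =>
            (hγrange i p₂ q₂ hp₂ hq₂ k).1) hM₂ hM k
      _ ≤ F (fun k => ∑ i, γ i p₁ q₁ k) M₁ k := by
          refine hFθ _ _ _ (fun k => Finset.sum_nonneg fun i _ =>
            (hγrange i p₁ q₁ hp₁ hq₁ k).1)
            (fun k => Finset.sum_le_sum fun i _ =>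
              hγmono i p₁ p₂ q₁ q₂ (fun j => (hp₂ j).1) hp (fun j => (hp₁ j).2)
                hq₂ hq k) hM₁ k
  · simp only [clearingMap]
    exact max_le_max (by linarith [hAT i]) le_rfl
end

section
/- Suppose the liquidation functions satisfy γ-monotonicity and the inverse demand function F satisfies F-monotonicity. Then the set of clearing solutions, partially ordered by the componentwise order on (p,q,M), is a nonempty complete lattice. -/
open Finset

/-- The set of clearing solutions: triples `(p,q,M) ∈ [0,p̄] × ℝ^m_+ × ℝ^n_+`
that are fixed points of the clearing map `Φ`. -/
noncomputable def clearingSet {n m : ℕ} (x : Fin n → ℝ) (S : Matrix (Fin n) (Fin m) ℝ)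
    (A : Matrix (Fin n) (Fin n) ℝ) (pbar : Fin n → ℝ)
    (γ : Fin n → (Fin n → ℝ) → (Fin m → ℝ) → (Fin m → ℝ))
    (F : (Fin m → ℝ) → (Fin n → ℝ) → (Fin m → ℝ)) :
    Set ((Fin n → ℝ) × (Fin m → ℝ) × (Fin n → ℝ)) :=
  {t | (∀ i, 0 ≤ t.1 i ∧ t.1 i ≤ pbar i) ∧ (∀ k, 0 ≤ t.2.1 k) ∧ (∀ i, 0 ≤ t.2.2 i) ∧
    clearingMap x S A pbar γ F t.1 t.2.1 t.2.2 = t}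

/-- Under γ-monotonicity and F-monotonicity, the set of clearing solutions, partially
ordered componentwise, is a nonempty complete lattice: it is nonempty and every subset
has a least upper bound and a greatest lower bound within the set. -/
theorem stmt4 {n m : ℕ} (hn : 1 ≤ n) (hm : 1 ≤ m)
    (x : Fin n → ℝ) (hx : ∀ i, 0 ≤ x i)
    (S : Matrix (Fin n) (Fin m) ℝ) (hS : ∀ i k, 0 ≤ S i k)
    (A : Matrix (Fin n) (Fin n) ℝ) (hA : ∀ i j, 0 ≤ A i j ∧ A i j ≤ 1)
    (pbar : Fin n → ℝ) (hpbar : ∀ i, 0 ≤ pbar i)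
    (γ : Fin n → (Fin n → ℝ) → (Fin m → ℝ) → (Fin m → ℝ))
    (hγrange : ∀ i p q, (∀ j, 0 ≤ p j ∧ p j ≤ pbar j) → (∀ k, 0 ≤ q k) →
      ∀ k, 0 ≤ γ i p q k ∧ γ i p q k ≤ S i k)
    (hγmono : ∀ i p₁ p₂ q₁ q₂, (∀ j, 0 ≤ p₂ j) → (∀ j, p₂ j ≤ p₁ j) → (∀ j, p₁ j ≤ pbar j) →
      (∀ k, 0 ≤ q₂ k) → (∀ k, q₂ k ≤ q₁ k) → ∀ k, γ i p₁ q₁ k ≤ γ i p₂ q₂ k)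
    (F : (Fin m → ℝ) → (Fin n → ℝ) → (Fin m → ℝ))
    (hFpos : ∀ θ M, (∀ k, 0 ≤ θ k) → (∀ i, 0 ≤ M i) → ∀ k, 0 ≤ F θ M k)
    (hFθ : ∀ θ₁ θ₂ M, (∀ k, 0 ≤ θ₂ k) → (∀ k, θ₂ k ≤ θ₁ k) → (∀ i, 0 ≤ M i) →
      ∀ k, F θ₁ M k ≤ F θ₂ M k)
    (hFM : ∀ θ M₁ M₂, (∀ k, 0 ≤ θ k) → (∀ i, 0 ≤ M₁ i) → (∀ i, M₁ i ≤ M₂ i) →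
      ∀ k, F θ M₁ k ≤ F θ M₂ k) :
    (clearingSet x S A pbar γ F).Nonempty ∧
    (∀ T ⊆ clearingSet x S A pbar γ F, ∃ a ∈ clearingSet x S A pbar γ F,
      (∀ t ∈ T, t ≤ a) ∧ ∀ b ∈ clearingSet x S A pbar γ F, (∀ t ∈ T, t ≤ b) → a ≤ b) ∧
    (∀ T ⊆ clearingSet x S A pbar γ F, ∃ a ∈ clearingSet x S A pbar γ F,
      (∀ t ∈ T, a ≤ t) ∧ ∀ b ∈ clearingSet x S A pbar γ F, (∀ t ∈ T, b ≤ t) → b ≤ a) := by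
  classical
  have hA0 : ∀ i j, 0 ≤ A i j := fun i j => (hA i j).1
  -- basic monotonicity / positivity facts
  have hATmono : ∀ p p' : Fin n → ℝ, (∀ j, p j ≤ p' j) → ∀ i, ATmul A p i ≤ ATmul A p' i := by
    intro p p' h i
    exact Finset.sum_le_sum fun j _ => mul_le_mul_of_nonneg_left (h j) (hA0 j i)
  have hAT0 : ∀ p : Fin n → ℝ, (∀ j, 0 ≤ p j) → ∀ i, 0 ≤ ATmul A p i := by
    intro p hp i
    exact Finset.sum_nonneg fun j _ => mul_nonneg (hA0 j i) (hp j)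
  have hSmono : ∀ q q' : Fin m → ℝ, (∀ k, q k ≤ q' k) → ∀ i,
      (∑ k, S i k * q k) ≤ ∑ k, S i k * q' k := by
    intro q q' h i
    exact Finset.sum_le_sum fun k _ => mul_le_mul_of_nonneg_left (h k) (hS i k)
  have hS0 : ∀ q : Fin m → ℝ, (∀ k, 0 ≤ q k) → ∀ i, 0 ≤ ∑ k, S i k * q k := by
    intro q hq i
    exact Finset.sum_nonneg fun k _ => mul_nonneg (hS i k) (hq k)
  set Mb : Fin n → ℝ := Mbar x A pbar with hMbdef
  have hMb0 : ∀ i, 0 ≤ Mb i := fun i => le_max_right _ _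
  set qb : Fin m → ℝ := F 0 Mb with hqbdef
  have hqb0 : ∀ k, 0 ≤ qb k := hFpos 0 Mb (fun _ => le_rfl) hMb0
  -- θ facts
  have hθ0 : ∀ p q, (∀ j, 0 ≤ p j) → (∀ j, p j ≤ pbar j) → (∀ k, 0 ≤ q k) →
      ∀ k, 0 ≤ ∑ i, γ i p q k := by
    intro p q hp hp' hq k
    exact Finset.sum_nonneg fun i _ =>
      (hγrange i p q (fun j => ⟨hp j, hp' j⟩) hq k).1
  have hθanti : ∀ p q p' q', (∀ j, 0 ≤ p j) → (∀ j, p j ≤ p' j) → (∀ j, p' j ≤ pbar j) →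
      (∀ k, 0 ≤ q k) → (∀ k, q k ≤ q' k) →
      ∀ k, (∑ i, γ i p' q' k) ≤ ∑ i, γ i p q k := by
    intro p q p' q' hp0 hpp' hp' hq0 hqq' k
    exact Finset.sum_le_sum fun i _ => hγmono i p' p q' q hp0 hpp' hp' hq0 hqq' k
  -- bounds for the three components of the clearing map, on the box
  have hΦ1mem : ∀ p q, (∀ j, 0 ≤ p j) → (∀ k, 0 ≤ q k) →
      ∀ i, 0 ≤ (clearingMap x S A pbar γ F p q 0).1 i ∧
        (clearingMap x S A pbar γ F p q 0).1 i ≤ pbar i := by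
    intro p q hp hq i
    constructor
    · exact le_min (hpbar i) (by
        have := add_nonneg (add_nonneg (hx i) (hS0 q hq i)) (hAT0 p hp i)
        simpa using this)
    · exact min_le_left _ _
  -- the ambient box
  haveI fact1 : Fact ((0 : Fin n → ℝ) ≤ pbar) := ⟨fun i => hpbar i⟩
  haveI fact2 : Fact ((0 : Fin m → ℝ) ≤ qb) := ⟨fun k => hqb0 k⟩
  haveI fact3 : Fact ((0 : Fin n → ℝ) ≤ Mb) := ⟨fun i => hMb0 i⟩
  -- full box-membership of the clearing map
  have hΦmem : ∀ p q M, (∀ j, 0 ≤ p j) → (∀ j, p j ≤ pbar j) → (∀ k, 0 ≤ q k) →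
      (∀ i, 0 ≤ M i) → (∀ i, M i ≤ Mb i) →
      (clearingMap x S A pbar γ F p q M).1 ∈ Set.Icc (0 : Fin n → ℝ) pbar ∧
      (clearingMap x S A pbar γ F p q M).2.1 ∈ Set.Icc (0 : Fin m → ℝ) qb ∧
      (clearingMap x S A pbar γ F p q M).2.2 ∈ Set.Icc (0 : Fin n → ℝ) Mb := by
    intro p q M hp0 hp1 hq0 hM0 hM1
    refine ⟨⟨fun i => ?_, fun i => min_le_left _ _⟩,
      ⟨fun k => hFpos _ _ (hθ0 p q hp0 hp1 hq0) hM0 k, fun k => ?_⟩,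
      ⟨fun i => le_max_right _ _, fun i => ?_⟩⟩
    · exact le_min (hpbar i)
        (add_nonneg (add_nonneg (hx i) (hS0 q hq0 i)) (hAT0 p hp0 i))
    · calc F (fun k => ∑ i, γ i p q k) M k
          ≤ F 0 M k := hFθ _ 0 M (fun _ => le_rfl) (hθ0 p q hp0 hp1 hq0) hM0 k
        _ ≤ F 0 Mb k := hFM 0 M Mb (fun _ => le_rfl) hM0 hM1 k
        _ = qb k := rfl
    · have : x i + ATmul A p i - pbar i ≤ x i + ATmul A pbar i - pbar i :=
        sub_le_sub_right (add_le_add_right (hATmono p pbar hp1 i) _) _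
      calc max (x i + ATmul A p i - pbar i) 0
          ≤ max (x i + ATmul A pbar i - pbar i) 0 := max_le_max this le_rfl
        _ = Mb i := rfl
  -- monotonicity of the clearing map on the box
  have hΦmono : ∀ p q M p' q' M', (∀ j, 0 ≤ p j) → (∀ j, p j ≤ p' j) → (∀ j, p' j ≤ pbar j) →
      (∀ k, 0 ≤ q k) → (∀ k, q k ≤ q' k) → (∀ i, 0 ≤ M i) → (∀ i, M i ≤ M' i) →
      (∀ i, (clearingMap x S A pbar γ F p q M).1 i ≤ (clearingMap x S A pbar γ F p' q' M').1 i) ∧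
      (∀ k, (clearingMap x S A pbar γ F p q M).2.1 k ≤ (clearingMap x S A pbar γ F p' q' M').2.1 k) ∧
      (∀ i, (clearingMap x S A pbar γ F p q M).2.2 i ≤ (clearingMap x S A pbar γ F p' q' M').2.2 i) := by
    intro p q M p' q' M' hp0 hpp hp1 hq0 hqq hM0 hMM
    refine ⟨fun i => min_le_min le_rfl ?_, fun k => ?_, fun i => ?_⟩
    · exact add_le_add (add_le_add_right (hSmono q q' hqq i) _) (hATmono p p' hpp i)
    · calc F (fun k => ∑ i, γ i p q k) M k
          ≤ F (fun k => ∑ i, γ i p' q' k) M k :=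
            hFθ _ _ M (hθ0 p' q' (fun j => le_trans (hp0 j) (hpp j)) hp1
              (fun k => le_trans (hq0 k) (hqq k)))
              (hθanti p q p' q' hp0 hpp hp1 hq0 hqq) hM0 k
        _ ≤ F (fun k => ∑ i, γ i p' q' k) M' k :=
            hFM _ M M' (hθ0 p' q' (fun j => le_trans (hp0 j) (hpp j)) hp1
              (fun k => le_trans (hq0 k) (hqq k))) hM0 hMM k
    · exact max_le_max (sub_le_sub_right (add_le_add_right (hATmono p p' hpp i) _) _) le_rfl
  -- the box as a complete lattice, and the restricted order homomorphism
  let g : (↥(Set.Icc (0 : Fin n → ℝ) pbar) × ↥(Set.Icc (0 : Fin m → ℝ) qb) ×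
        ↥(Set.Icc (0 : Fin n → ℝ) Mb)) →o
      (↥(Set.Icc (0 : Fin n → ℝ) pbar) × ↥(Set.Icc (0 : Fin m → ℝ) qb) ×
        ↥(Set.Icc (0 : Fin n → ℝ) Mb)) :=
    { toFun := fun z =>
        (⟨(clearingMap x S A pbar γ F z.1.1 z.2.1.1 z.2.2.1).1,
            (hΦmem z.1.1 z.2.1.1 z.2.2.1 (fun j => z.1.2.1 j) (fun j => z.1.2.2 j)
              (fun k => z.2.1.2.1 k) (fun i => z.2.2.2.1 i) (fun i => z.2.2.2.2 i)).1⟩,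
         ⟨(clearingMap x S A pbar γ F z.1.1 z.2.1.1 z.2.2.1).2.1,
            (hΦmem z.1.1 z.2.1.1 z.2.2.1 (fun j => z.1.2.1 j) (fun j => z.1.2.2 j)
              (fun k => z.2.1.2.1 k) (fun i => z.2.2.2.1 i) (fun i => z.2.2.2.2 i)).2.1⟩,
         ⟨(clearingMap x S A pbar γ F z.1.1 z.2.1.1 z.2.2.1).2.2,
            (hΦmem z.1.1 z.2.1.1 z.2.2.1 (fun j => z.1.2.1 j) (fun j => z.1.2.2 j)
              (fun k => z.2.1.2.1 k) (fun i => z.2.2.2.1 i) (fun i => z.2.2.2.2 i)).2.2⟩)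
      monotone' := by
        intro z w hzw
        have h := hΦmono z.1.1 z.2.1.1 z.2.2.1 w.1.1 w.2.1.1 w.2.2.1
          (fun j => z.1.2.1 j) (fun j => hzw.1 j) (fun j => w.1.2.2 j)
          (fun k => z.2.1.2.1 k) (fun k => hzw.2.1 k)
          (fun i => z.2.2.2.1 i) (fun i => hzw.2.2 i)
        exact ⟨fun i => h.1 i, fun k => h.2.1 k, fun i => h.2.2 i⟩ }
  -- clearing solutions lie in the box
  have hbox : ∀ t ∈ clearingSet x S A pbar γ F,
      t.1 ∈ Set.Icc (0 : Fin n → ℝ) pbar ∧ t.2.1 ∈ Set.Icc (0 : Fin m → ℝ) qb ∧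
      t.2.2 ∈ Set.Icc (0 : Fin n → ℝ) Mb := by
    intro t ht
    obtain ⟨hb1, hb2, hb3, heq⟩ := ht
    have heq2 : (clearingMap x S A pbar γ F t.1 t.2.1 t.2.2).2.1 = t.2.1 :=
      congrArg (fun u => u.2.1) heq
    have heq3 : (clearingMap x S A pbar γ F t.1 t.2.1 t.2.2).2.2 = t.2.2 :=
      congrArg (fun u => u.2.2) heq
    have hM1 : ∀ i, t.2.2 i ≤ Mb i := by
      intro i
      have h : t.2.2 i = max (x i + ATmul A t.1 i - pbar i) 0 := (congrFun heq3 i).symm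
      rw [h]
      exact max_le_max (sub_le_sub_right (add_le_add_right
        (hATmono t.1 pbar (fun j => (hb1 j).2) i) _) _) le_rfl
    refine ⟨⟨fun i => (hb1 i).1, fun i => (hb1 i).2⟩, ⟨fun k => hb2 k, fun k => ?_⟩,
      ⟨fun i => hb3 i, fun i => hM1 i⟩⟩
    have hq : t.2.1 k = F (fun k => ∑ i, γ i t.1 t.2.1 k) t.2.2 k := (congrFun heq2 k).symm
    rw [hq]
    calc F (fun k => ∑ i, γ i t.1 t.2.1 k) t.2.2 k
        ≤ F 0 t.2.2 k := hFθ _ 0 t.2.2 (fun _ => le_rfl)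
          (hθ0 t.1 t.2.1 (fun j => (hb1 j).1) (fun j => (hb1 j).2) hb2) hb3 k
      _ ≤ F 0 Mb k := hFM 0 t.2.2 Mb (fun _ => le_rfl) hb3 hM1 k
      _ = qb k := rfl
  -- fixed points of g correspond exactly to clearing solutions
  have hfix : ∀ z, g z = z ↔ (z.1.1, z.2.1.1, z.2.2.1) ∈ clearingSet x S A pbar γ F := by
    intro z
    constructor
    · intro h
      have h1 : (clearingMap x S A pbar γ F z.1.1 z.2.1.1 z.2.2.1).1 = z.1.1 :=
        congrArg (fun u => u.1.1) h
      have h2 : (clearingMap x S A pbar γ F z.1.1 z.2.1.1 z.2.2.1).2.1 = z.2.1.1 :=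
        congrArg (fun u => u.2.1.1) h
      have h3 : (clearingMap x S A pbar γ F z.1.1 z.2.1.1 z.2.2.1).2.2 = z.2.2.1 :=
        congrArg (fun u => u.2.2.1) h
      exact ⟨fun i => ⟨z.1.2.1 i, z.1.2.2 i⟩, fun k => z.2.1.2.1 k, fun i => z.2.2.2.1 i,
        Prod.ext h1 (Prod.ext h2 h3)⟩
    · intro h
      obtain ⟨_, _, _, heq⟩ := h
      have h1 : (clearingMap x S A pbar γ F z.1.1 z.2.1.1 z.2.2.1).1 = z.1.1 :=
        congrArg Prod.fst heq
      have h2 : (clearingMap x S A pbar γ F z.1.1 z.2.1.1 z.2.2.1).2.1 = z.2.1.1 :=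
        congrArg (fun u => u.2.1) heq
      have h3 : (clearingMap x S A pbar γ F z.1.1 z.2.1.1 z.2.2.1).2.2 = z.2.2.1 :=
        congrArg (fun u => u.2.2) heq
      exact Prod.ext (Subtype.ext h1) (Prod.ext (Subtype.ext h2) (Subtype.ext h3))
  -- package a clearing solution as a fixed point of g
  have hmk : ∀ t (ht : t ∈ clearingSet x S A pbar γ F),
      ∃ u : ↥(Function.fixedPoints ⇑g), (u.val.1.1, u.val.2.1.1, u.val.2.2.1) = t := by
    intro t ht
    obtain ⟨hB1, hB2, hB3⟩ := hbox t ht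
    refine ⟨⟨(⟨t.1, hB1⟩, ⟨t.2.1, hB2⟩, ⟨t.2.2, hB3⟩), ?_⟩, rfl⟩
    show g _ = _
    exact (hfix (⟨t.1, hB1⟩, ⟨t.2.1, hB2⟩, ⟨t.2.2, hB3⟩)).2 ht
  -- Knaster–Tarski
  letI : CompleteLattice ↥(Function.fixedPoints ⇑g) := fixedPoints.completeLattice g
  refine ⟨?_, ?_, ?_⟩
  · obtain ⟨z, hz⟩ := (⊥ : ↥(Function.fixedPoints ⇑g))
    exact ⟨(z.1.1, z.2.1.1, z.2.2.1), (hfix z).1 hz⟩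
  · intro T hT
    set T' : Set ↥(Function.fixedPoints ⇑g) :=
      {u | (u.val.1.1, u.val.2.1.1, u.val.2.2.1) ∈ T} with hT'def
    set a' := sSup T' with ha'def
    refine ⟨(a'.val.1.1, a'.val.2.1.1, a'.val.2.2.1), (hfix _).1 a'.2, ?_, ?_⟩
    · intro t htT
      obtain ⟨u, hu⟩ := hmk t (hT htT)
      have hle : u ≤ a' := le_sSup (by rw [hT'def]; exact Set.mem_setOf.2 (hu ▸ htT))
      have hval : u.val ≤ a'.val := hle
      rw [← hu]
      exact ⟨fun i => hval.1 i, fun k => hval.2.1 k, fun i => hval.2.2 i⟩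
    · intro b hb hub
      obtain ⟨ub, hubeq⟩ := hmk b hb
      have hle : a' ≤ ub := by
        refine sSup_le fun u hu => ?_
        have h1 : (u.val.1.1, u.val.2.1.1, u.val.2.2.1) ≤ b := hub _ hu
        show u.val ≤ ub.val
        rw [← hubeq] at h1
        exact ⟨fun i => h1.1 i, fun k => h1.2.1 k, fun i => h1.2.2 i⟩
      have hval : a'.val ≤ ub.val := hle
      rw [← hubeq]
      exact ⟨fun i => hval.1 i, fun k => hval.2.1 k, fun i => hval.2.2 i⟩
  · intro T hT
    set T' : Set ↥(Function.fixedPoints ⇑g) :=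
      {u | (u.val.1.1, u.val.2.1.1, u.val.2.2.1) ∈ T} with hT'def
    set a' := sInf T' with ha'def
    refine ⟨(a'.val.1.1, a'.val.2.1.1, a'.val.2.2.1), (hfix _).1 a'.2, ?_, ?_⟩
    · intro t htT
      obtain ⟨u, hu⟩ := hmk t (hT htT)
      have hle : a' ≤ u := sInf_le (by rw [hT'def]; exact Set.mem_setOf.2 (hu ▸ htT))
      have hval : a'.val ≤ u.val := hle
      rw [← hu]
      exact ⟨fun i => hval.1 i, fun k => hval.2.1 k, fun i => hval.2.2 i⟩
    · intro b hb hub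
      obtain ⟨ub, hubeq⟩ := hmk b hb
      have hle : ub ≤ a' := by
        refine le_sInf fun u hu => ?_
        have h1 : b ≤ (u.val.1.1, u.val.2.1.1, u.val.2.2.1) := hub _ hu
        show ub.val ≤ u.val
        rw [← hubeq] at h1
        exact ⟨fun i => h1.1 i, fun k => h1.2.1 k, fun i => h1.2.2 i⟩
      have hval : ub.val ≤ a'.val := hle
      rw [← hubeq]
      exact ⟨fun i => hval.1 i, fun k => hval.2.1 k, fun i => hval.2.2 i⟩
end

section
/- Suppose the liquidation functions satisfy γ-monotonicity and the inverse demand function F satisfies F-monotonicity. Then there exist a greatest clearing solution (p↑, q↑, M↑) and a least clearing solution (p↓, q↓, M↓); that is, both triples are clearing solutions and every clearing solution (p, q, M) satisfies (p↓, q↓, M↓) ≤ (p, q, M) ≤ (p↑, q↑, M↑) componentwise. -/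
open Finset

/-- Knaster–Tarski (greatest fixed point) on a box in `(Fin n → ℝ) × (Fin m → ℝ) × (Fin n → ℝ)`. -/
lemma box_gfp {n m : ℕ} (lo hi : (Fin n → ℝ) × (Fin m → ℝ) × (Fin n → ℝ))
    (hlohi : lo ≤ hi)
    (Φ : (Fin n → ℝ) × (Fin m → ℝ) × (Fin n → ℝ) → (Fin n → ℝ) × (Fin m → ℝ) × (Fin n → ℝ))
    (hmap : ∀ t, lo ≤ t → t ≤ hi → lo ≤ Φ t ∧ Φ t ≤ hi)
    (hmono : ∀ t₁ t₂, lo ≤ t₁ → t₂ ≤ hi → t₁ ≤ t₂ → Φ t₁ ≤ Φ t₂) :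
    ∃ u, lo ≤ u ∧ u ≤ hi ∧ Φ u = u ∧ ∀ t, lo ≤ t → t ≤ hi → Φ t = t → t ≤ u := by
  set P : Set ((Fin n → ℝ) × (Fin m → ℝ) × (Fin n → ℝ)) :=
    {t | lo ≤ t ∧ t ≤ hi ∧ t ≤ Φ t} with hP
  have hloP : lo ∈ P := ⟨le_rfl, hlohi, (hmap lo le_rfl hlohi).1⟩
  refine ⟨(fun i => sSup ((fun t => t.1 i) '' P),
          fun k => sSup ((fun t => t.2.1 k) '' P),
          fun i => sSup ((fun t => t.2.2 i) '' P)), ?_⟩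
  set u : (Fin n → ℝ) × (Fin m → ℝ) × (Fin n → ℝ) :=
    (fun i => sSup ((fun t => t.1 i) '' P),
     fun k => sSup ((fun t => t.2.1 k) '' P),
     fun i => sSup ((fun t => t.2.2 i) '' P)) with hu
  have hbdd1 : ∀ i, BddAbove ((fun t : (Fin n → ℝ) × (Fin m → ℝ) × (Fin n → ℝ) => t.1 i) '' P) :=
    fun i => ⟨hi.1 i, by rintro _ ⟨t, ht, rfl⟩; exact ht.2.1.1 i⟩
  have hbdd2 : ∀ k, BddAbove ((fun t : (Fin n → ℝ) × (Fin m → ℝ) × (Fin n → ℝ) => t.2.1 k) '' P) :=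
    fun k => ⟨hi.2.1 k, by rintro _ ⟨t, ht, rfl⟩; exact ht.2.1.2.1 k⟩
  have hbdd3 : ∀ i, BddAbove ((fun t : (Fin n → ℝ) × (Fin m → ℝ) × (Fin n → ℝ) => t.2.2 i) '' P) :=
    fun i => ⟨hi.2.2 i, by rintro _ ⟨t, ht, rfl⟩; exact ht.2.1.2.2 i⟩
  have hub : ∀ t ∈ P, t ≤ u := by
    intro t ht
    exact ⟨fun i => le_csSup (hbdd1 i) ⟨t, ht, rfl⟩,
           fun k => le_csSup (hbdd2 k) ⟨t, ht, rfl⟩,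
           fun i => le_csSup (hbdd3 i) ⟨t, ht, rfl⟩⟩
  have hlou : lo ≤ u := hub lo hloP
  have huhi : u ≤ hi := by
    refine ⟨fun i => csSup_le ⟨lo.1 i, lo, hloP, rfl⟩ ?_,
            fun k => csSup_le ⟨lo.2.1 k, lo, hloP, rfl⟩ ?_,
            fun i => csSup_le ⟨lo.2.2 i, lo, hloP, rfl⟩ ?_⟩ <;>
      rintro _ ⟨t, ht, rfl⟩
    · exact ht.2.1.1 i
    · exact ht.2.1.2.1 k
    · exact ht.2.1.2.2 i
  have hupost : u ≤ Φ u := by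
    have key : ∀ t ∈ P, t ≤ Φ u := fun t ht =>
      le_trans ht.2.2 (hmono t u ht.1 huhi (hub t ht))
    refine ⟨fun i => csSup_le ⟨lo.1 i, lo, hloP, rfl⟩ ?_,
            fun k => csSup_le ⟨lo.2.1 k, lo, hloP, rfl⟩ ?_,
            fun i => csSup_le ⟨lo.2.2 i, lo, hloP, rfl⟩ ?_⟩ <;>
      rintro _ ⟨t, ht, rfl⟩
    · exact (key t ht).1 i
    · exact (key t ht).2.1 k
    · exact (key t ht).2.2 i
  have hΦu := hmap u hlou huhi
  have hΦuP : Φ u ∈ P := ⟨hΦu.1, hΦu.2, hmono u (Φ u) hlou hΦu.2 hupost⟩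
  have hfix : Φ u = u := le_antisymm (hub _ hΦuP) hupost
  exact ⟨hlou, huhi, hfix, fun t h1 h2 h3 => hub t ⟨h1, h2, le_of_eq h3.symm⟩⟩

/-- Knaster–Tarski (least fixed point) on a box in `(Fin n → ℝ) × (Fin m → ℝ) × (Fin n → ℝ)`. -/
lemma box_lfp {n m : ℕ} (lo hi : (Fin n → ℝ) × (Fin m → ℝ) × (Fin n → ℝ))
    (hlohi : lo ≤ hi)
    (Φ : (Fin n → ℝ) × (Fin m → ℝ) × (Fin n → ℝ) → (Fin n → ℝ) × (Fin m → ℝ) × (Fin n → ℝ))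
    (hmap : ∀ t, lo ≤ t → t ≤ hi → lo ≤ Φ t ∧ Φ t ≤ hi)
    (hmono : ∀ t₁ t₂, lo ≤ t₁ → t₂ ≤ hi → t₁ ≤ t₂ → Φ t₁ ≤ Φ t₂) :
    ∃ u, lo ≤ u ∧ u ≤ hi ∧ Φ u = u ∧ ∀ t, lo ≤ t → t ≤ hi → Φ t = t → u ≤ t := by
  set P : Set ((Fin n → ℝ) × (Fin m → ℝ) × (Fin n → ℝ)) :=
    {t | lo ≤ t ∧ t ≤ hi ∧ Φ t ≤ t} with hP
  have hhiP : hi ∈ P := ⟨hlohi, le_rfl, (hmap hi hlohi le_rfl).2⟩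
  refine ⟨(fun i => sInf ((fun t => t.1 i) '' P),
          fun k => sInf ((fun t => t.2.1 k) '' P),
          fun i => sInf ((fun t => t.2.2 i) '' P)), ?_⟩
  set u : (Fin n → ℝ) × (Fin m → ℝ) × (Fin n → ℝ) :=
    (fun i => sInf ((fun t => t.1 i) '' P),
     fun k => sInf ((fun t => t.2.1 k) '' P),
     fun i => sInf ((fun t => t.2.2 i) '' P)) with hu
  have hbdd1 : ∀ i, BddBelow ((fun t : (Fin n → ℝ) × (Fin m → ℝ) × (Fin n → ℝ) => t.1 i) '' P) :=
    fun i => ⟨lo.1 i, by rintro _ ⟨t, ht, rfl⟩; exact ht.1.1 i⟩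
  have hbdd2 : ∀ k, BddBelow ((fun t : (Fin n → ℝ) × (Fin m → ℝ) × (Fin n → ℝ) => t.2.1 k) '' P) :=
    fun k => ⟨lo.2.1 k, by rintro _ ⟨t, ht, rfl⟩; exact ht.1.2.1 k⟩
  have hbdd3 : ∀ i, BddBelow ((fun t : (Fin n → ℝ) × (Fin m → ℝ) × (Fin n → ℝ) => t.2.2 i) '' P) :=
    fun i => ⟨lo.2.2 i, by rintro _ ⟨t, ht, rfl⟩; exact ht.1.2.2 i⟩
  have hlb : ∀ t ∈ P, u ≤ t := by
    intro t ht
    exact ⟨fun i => csInf_le (hbdd1 i) ⟨t, ht, rfl⟩,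
           fun k => csInf_le (hbdd2 k) ⟨t, ht, rfl⟩,
           fun i => csInf_le (hbdd3 i) ⟨t, ht, rfl⟩⟩
  have huhi : u ≤ hi := hlb hi hhiP
  have hlou : lo ≤ u := by
    refine ⟨fun i => le_csInf ⟨hi.1 i, hi, hhiP, rfl⟩ ?_,
            fun k => le_csInf ⟨hi.2.1 k, hi, hhiP, rfl⟩ ?_,
            fun i => le_csInf ⟨hi.2.2 i, hi, hhiP, rfl⟩ ?_⟩ <;>
      rintro _ ⟨t, ht, rfl⟩
    · exact ht.1.1 i
    · exact ht.1.2.1 k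
    · exact ht.1.2.2 i
  have hupre : Φ u ≤ u := by
    have key : ∀ t ∈ P, Φ u ≤ t := fun t ht =>
      le_trans (hmono u t hlou ht.2.1 (hlb t ht)) ht.2.2
    refine ⟨fun i => le_csInf ⟨hi.1 i, hi, hhiP, rfl⟩ ?_,
            fun k => le_csInf ⟨hi.2.1 k, hi, hhiP, rfl⟩ ?_,
            fun i => le_csInf ⟨hi.2.2 i, hi, hhiP, rfl⟩ ?_⟩ <;>
      rintro _ ⟨t, ht, rfl⟩
    · exact (key t ht).1 i
    · exact (key t ht).2.1 k
    · exact (key t ht).2.2 i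
  have hΦu := hmap u hlou huhi
  have hΦuP : Φ u ∈ P := ⟨hΦu.1, hΦu.2, hmono (Φ u) u hΦu.1 huhi hupre⟩
  have hfix : Φ u = u := le_antisymm hupre (hlb _ hΦuP)
  exact ⟨hlou, huhi, hfix, fun t h1 h2 h3 => hlb t ⟨h1, h2, le_of_eq h3⟩⟩

/-- Under γ-monotonicity and F-monotonicity, there exist a greatest clearing solution
`(p↑,q↑,M↑)` and a least clearing solution `(p↓,q↓,M↓)`: both are clearing solutions
and every clearing solution lies between them in the componentwise order. -/
theorem stmt5 {n m : ℕ} (hn : 1 ≤ n) (hm : 1 ≤ m)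
    (x : Fin n → ℝ) (hx : ∀ i, 0 ≤ x i)
    (S : Matrix (Fin n) (Fin m) ℝ) (hS : ∀ i k, 0 ≤ S i k)
    (A : Matrix (Fin n) (Fin n) ℝ) (hA : ∀ i j, 0 ≤ A i j ∧ A i j ≤ 1)
    (pbar : Fin n → ℝ) (hpbar : ∀ i, 0 ≤ pbar i)
    (γ : Fin n → (Fin n → ℝ) → (Fin m → ℝ) → (Fin m → ℝ))
    (hγrange : ∀ i p q, (∀ j, 0 ≤ p j ∧ p j ≤ pbar j) → (∀ k, 0 ≤ q k) →
      ∀ k, 0 ≤ γ i p q k ∧ γ i p q k ≤ S i k)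
    (hγmono : ∀ i p₁ p₂ q₁ q₂, (∀ j, 0 ≤ p₂ j) → (∀ j, p₂ j ≤ p₁ j) → (∀ j, p₁ j ≤ pbar j) →
      (∀ k, 0 ≤ q₂ k) → (∀ k, q₂ k ≤ q₁ k) → ∀ k, γ i p₁ q₁ k ≤ γ i p₂ q₂ k)
    (F : (Fin m → ℝ) → (Fin n → ℝ) → (Fin m → ℝ))
    (hFpos : ∀ θ M, (∀ k, 0 ≤ θ k) → (∀ i, 0 ≤ M i) → ∀ k, 0 ≤ F θ M k)
    (hFθ : ∀ θ₁ θ₂ M, (∀ k, 0 ≤ θ₂ k) → (∀ k, θ₂ k ≤ θ₁ k) → (∀ i, 0 ≤ M i) →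
      ∀ k, F θ₁ M k ≤ F θ₂ M k)
    (hFM : ∀ θ M₁ M₂, (∀ k, 0 ≤ θ k) → (∀ i, 0 ≤ M₁ i) → (∀ i, M₁ i ≤ M₂ i) →
      ∀ k, F θ M₁ k ≤ F θ M₂ k) :
    ∃ tup ∈ clearingSet x S A pbar γ F, ∃ tdown ∈ clearingSet x S A pbar γ F,
      ∀ t ∈ clearingSet x S A pbar γ F, tdown ≤ t ∧ t ≤ tup := by

  classical
  set Mb : Fin n → ℝ := Mbar x A pbar with hMbdef
  set qb : Fin m → ℝ := F (fun _ => 0) Mb with hqbdef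
  have hMb0 : ∀ i, 0 ≤ Mb i := fun i => le_max_right _ _
  have hqb0 : ∀ k, 0 ≤ qb k := hFpos _ _ (fun _ => le_rfl) hMb0
  set lo : (Fin n → ℝ) × (Fin m → ℝ) × (Fin n → ℝ) := (fun _ => 0, fun _ => 0, fun _ => 0)
    with hlodef
  set hi : (Fin n → ℝ) × (Fin m → ℝ) × (Fin n → ℝ) := (pbar, qb, Mb) with hhidef
  have hlohi : lo ≤ hi := ⟨fun i => hpbar i, fun k => hqb0 k, fun i => hMb0 i⟩
  have hATmono : ∀ p p' : Fin n → ℝ, (∀ j, p j ≤ p' j) → ∀ i, ATmul A p i ≤ ATmul A p' i :=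
    fun p p' h i => Finset.sum_le_sum fun j _ => mul_le_mul_of_nonneg_left (h j) (hA j i).1
  have hATnn : ∀ p : Fin n → ℝ, (∀ j, 0 ≤ p j) → ∀ i, 0 ≤ ATmul A p i :=
    fun p h i => Finset.sum_nonneg fun j _ => mul_nonneg (hA j i).1 (h j)
  have hθnn : ∀ (p : Fin n → ℝ) (q : Fin m → ℝ), (∀ j, 0 ≤ p j ∧ p j ≤ pbar j) →
      (∀ k, 0 ≤ q k) → ∀ k, 0 ≤ ∑ i, γ i p q k :=
    fun p q hp hq k => Finset.sum_nonneg fun i _ => (hγrange i p q hp hq k).1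
  set Φ : (Fin n → ℝ) × (Fin m → ℝ) × (Fin n → ℝ) → (Fin n → ℝ) × (Fin m → ℝ) × (Fin n → ℝ) :=
    fun t => clearingMap x S A pbar γ F t.1 t.2.1 t.2.2 with hΦdef
  have hmap : ∀ t, lo ≤ t → t ≤ hi → lo ≤ Φ t ∧ Φ t ≤ hi := by
    intro t hlo hhi
    have hp : ∀ j, 0 ≤ t.1 j ∧ t.1 j ≤ pbar j := fun j => ⟨hlo.1 j, hhi.1 j⟩
    have hq : ∀ k, 0 ≤ t.2.1 k := fun k => hlo.2.1 k
    have hM : ∀ i, 0 ≤ t.2.2 i := fun i => hlo.2.2 i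
    have hθ := hθnn t.1 t.2.1 hp hq
    constructor
    · refine ⟨fun i => ?_, fun k => ?_, fun i => ?_⟩
      · show (0:ℝ) ≤ min (pbar i) (x i + (∑ k, S i k * t.2.1 k) + ATmul A t.1 i)
        exact le_min (hpbar i) (add_nonneg (add_nonneg (hx i)
          (Finset.sum_nonneg fun k _ => mul_nonneg (hS i k) (hq k)))
          (hATnn t.1 (fun j => (hp j).1) i))
      · exact hFpos _ _ hθ hM k
      · exact le_max_right _ _
    · refine ⟨fun i => min_le_left _ _, fun k => ?_, fun i => ?_⟩
      · show F (fun k => ∑ i, γ i t.1 t.2.1 k) t.2.2 k ≤ qb k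
        calc F (fun k => ∑ i, γ i t.1 t.2.1 k) t.2.2 k
            ≤ F (fun _ => 0) t.2.2 k := hFθ _ _ _ (fun _ => le_rfl) hθ hM k
          _ ≤ F (fun _ => 0) Mb k := hFM _ _ _ (fun _ => le_rfl) hM (fun i => hhi.2.2 i) k
      · show max (x i + ATmul A t.1 i - pbar i) 0 ≤ Mb i
        have : x i + ATmul A t.1 i - pbar i ≤ x i + ATmul A pbar i - pbar i := by
          have := hATmono t.1 pbar (fun j => (hp j).2) i; linarith
        exact (max_le_max this le_rfl : max _ 0 ≤ max (x i + ATmul A pbar i - pbar i) 0)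
  have hmono : ∀ t₁ t₂, lo ≤ t₁ → t₂ ≤ hi → t₁ ≤ t₂ → Φ t₁ ≤ Φ t₂ := by
    intro t₁ t₂ h1 h2 h12
    have hp1 : ∀ j, 0 ≤ t₁.1 j := fun j => h1.1 j
    have hp2 : ∀ j, 0 ≤ t₂.1 j ∧ t₂.1 j ≤ pbar j :=
      fun j => ⟨le_trans (hp1 j) (h12.1 j), h2.1 j⟩
    have hq1 : ∀ k, 0 ≤ t₁.2.1 k := fun k => h1.2.1 k
    have hq2 : ∀ k, 0 ≤ t₂.2.1 k := fun k => le_trans (hq1 k) (h12.2.1 k)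
    have hM1 : ∀ i, 0 ≤ t₁.2.2 i := fun i => h1.2.2 i
    have hθ2 := hθnn t₂.1 t₂.2.1 hp2 hq2
    have hθle : ∀ k, (∑ i, γ i t₂.1 t₂.2.1 k) ≤ ∑ i, γ i t₁.1 t₁.2.1 k :=
      fun k => Finset.sum_le_sum fun i _ =>
        hγmono i t₂.1 t₁.1 t₂.2.1 t₁.2.1 hp1 (fun j => h12.1 j) (fun j => (hp2 j).2)
          hq1 (fun k => h12.2.1 k) k
    refine ⟨fun i => ?_, fun k => ?_, fun i => ?_⟩
    · show min (pbar i) (x i + (∑ k, S i k * t₁.2.1 k) + ATmul A t₁.1 i)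
        ≤ min (pbar i) (x i + (∑ k, S i k * t₂.2.1 k) + ATmul A t₂.1 i)
      refine min_le_min le_rfl (add_le_add (add_le_add le_rfl
        (Finset.sum_le_sum fun k _ => mul_le_mul_of_nonneg_left (h12.2.1 k) (hS i k)))
        (hATmono t₁.1 t₂.1 (fun j => h12.1 j) i))
    · show F (fun k => ∑ i, γ i t₁.1 t₁.2.1 k) t₁.2.2 k
        ≤ F (fun k => ∑ i, γ i t₂.1 t₂.2.1 k) t₂.2.2 k
      calc F (fun k => ∑ i, γ i t₁.1 t₁.2.1 k) t₁.2.2 k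
          ≤ F (fun k => ∑ i, γ i t₂.1 t₂.2.1 k) t₁.2.2 k := hFθ _ _ _ hθ2 hθle hM1 k
        _ ≤ F (fun k => ∑ i, γ i t₂.1 t₂.2.1 k) t₂.2.2 k :=
            hFM _ _ _ hθ2 hM1 (fun i => h12.2.2 i) k
    · show max (x i + ATmul A t₁.1 i - pbar i) 0 ≤ max (x i + ATmul A t₂.1 i - pbar i) 0
      refine max_le_max ?_ le_rfl
      have := hATmono t₁.1 t₂.1 (fun j => h12.1 j) i; linarith
  have mem_of_box : ∀ t, lo ≤ t → t ≤ hi → Φ t = t → t ∈ clearingSet x S A pbar γ F :=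
    fun t h1 h2 h3 => ⟨fun i => ⟨h1.1 i, h2.1 i⟩, fun k => h1.2.1 k, fun i => h1.2.2 i, h3⟩
  have box_of_mem : ∀ t ∈ clearingSet x S A pbar γ F, lo ≤ t ∧ t ≤ hi ∧ Φ t = t := by
    intro t ht
    obtain ⟨hp, hq, hM, hfix⟩ := ht
    have hMeq : t.2.2 = fun i => max (x i + ATmul A t.1 i - pbar i) 0 :=
      (congrArg (fun s => s.2.2) hfix).symm
    have hqeq : t.2.1 = F (fun k => ∑ i, γ i t.1 t.2.1 k) t.2.2 :=
      (congrArg (fun s => s.2.1) hfix).symm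
    have hMle : ∀ i, t.2.2 i ≤ Mb i := by
      intro i
      calc t.2.2 i = max (x i + ATmul A t.1 i - pbar i) 0 := congrFun hMeq i
        _ ≤ max (x i + ATmul A pbar i - pbar i) 0 := by
            refine max_le_max ?_ le_rfl
            have := hATmono t.1 pbar (fun j => (hp j).2) i; linarith
        _ = Mb i := rfl
    have hqle : ∀ k, t.2.1 k ≤ qb k := by
      intro k
      calc t.2.1 k = F (fun k => ∑ i, γ i t.1 t.2.1 k) t.2.2 k := congrFun hqeq k
        _ ≤ F (fun _ => 0) t.2.2 k :=
            hFθ _ _ _ (fun _ => le_rfl) (hθnn t.1 t.2.1 hp hq) hM k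
        _ ≤ F (fun _ => 0) Mb k := hFM _ _ _ (fun _ => le_rfl) hM hMle k
        _ = qb k := rfl
    exact ⟨⟨fun i => (hp i).1, fun k => hq k, fun i => hM i⟩,
      ⟨fun i => (hp i).2, hqle, hMle⟩, hfix⟩
  obtain ⟨tup, hlou, huhi, hfixu, hmaxu⟩ := box_gfp lo hi hlohi Φ hmap hmono
  obtain ⟨tdn, hlod, hdhi, hfixd, hmind⟩ := box_lfp lo hi hlohi Φ hmap hmono
  refine ⟨tup, mem_of_box _ hlou huhi hfixu, tdn, mem_of_box _ hlod hdhi hfixd, ?_⟩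
  intro t ht
  obtain ⟨h1, h2, h3⟩ := box_of_mem t ht
  exact ⟨hmind t h1 h2 h3, hmaxu t h1 h2 h3⟩
end

section
/- The minimal liquidation condition together with proportionality uniquely characterizes the proportional liquidation function: fix a bank i, p ∈ [0,p̄], and q ∈ ℝ^m_+ with q^T s_i > 0. If g ∈ ℝ^m satisfies 0 ≤ g ≤ s_i, the minimal liquidation condition q^T g = min(q^T s_i, (p̄_i − x_i − (A^T p)_i)^+), and the proportionality relations s_{il} g_k = s_{ik} g_l for all assets k, l, then g equals the proportional liquidation γ_i(p,q), i.e. g_k = (s_{ik}/(q^T s_i)) · min(q^T s_i, (p̄_i − x_i − (A^T p)_i)^+) for every asset k. -/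
open Finset

/-- The proportional liquidation function of bank `i`:
`γ_{ik}(p,q) = (s_{ik}/(q^T s_i)) · min(q^T s_i, (p̄_i − x_i − (A^T p)_i)^+)`. -/
noncomputable def propLiq {n m : ℕ} (s : Fin n → Fin m → ℝ) (x : Fin n → ℝ)
    (A : Matrix (Fin n) (Fin n) ℝ) (pbar : Fin n → ℝ)
    (i : Fin n) (p : Fin n → ℝ) (q : Fin m → ℝ) : Fin m → ℝ :=
  fun k => (s i k / ∑ l, q l * s i l) *
    min (∑ l, q l * s i l) (max (pbar i - x i - ATmul A p i) 0)

/-- The minimal liquidation condition together with proportionality uniquely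
characterizes the proportional liquidation function. -/
theorem stmt10 {n m : ℕ}
    (s : Fin n → Fin m → ℝ) (hs : ∀ i k, 0 ≤ s i k)
    (x : Fin n → ℝ) (hx : ∀ i, 0 ≤ x i)
    (A : Matrix (Fin n) (Fin n) ℝ) (hA : ∀ i j, 0 ≤ A i j ∧ A i j ≤ 1)
    (pbar : Fin n → ℝ) (hpbar : ∀ i, 0 ≤ pbar i)
    (i : Fin n) (p : Fin n → ℝ) (hp : ∀ j, 0 ≤ p j ∧ p j ≤ pbar j)
    (q : Fin m → ℝ) (hq : ∀ k, 0 ≤ q k) (hqs : 0 < ∑ l, q l * s i l)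
    (g : Fin m → ℝ) (hg : ∀ k, 0 ≤ g k ∧ g k ≤ s i k)
    (hgmin : ∑ k, q k * g k =
      min (∑ l, q l * s i l) (max (pbar i - x i - ATmul A p i) 0))
    (hgprop : ∀ k l, s i l * g k = s i k * g l) :
    ∀ k, g k = (s i k / ∑ l, q l * s i l) *
      min (∑ l, q l * s i l) (max (pbar i - x i - ATmul A p i) 0) := by
  intro k
  have key : (∑ l, q l * s i l) * g k = s i k * (∑ l, q l * g l) := by
    rw [Finset.sum_mul, Finset.mul_sum]
    apply Finset.sum_congr rfl
    intro l _
    rw [mul_assoc, hgprop k l]; ring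
  rw [hgmin] at key
  field_simp
  linarith [key]
end

section
/- The proportional liquidation function is monotonically nonincreasing: for every bank i, if p¹, p² ∈ [0,p̄] and q¹, q² ∈ ℝ^m_+ satisfy p¹ ≥ p², q¹ ≥ q² (componentwise) and q²^T s_i > 0, then γ_i(p¹,q¹) ≤ γ_i(p²,q²) componentwise. -/
open Finset

/-- The proportional liquidation function is monotonically nonincreasing:
`p¹ ≥ p²`, `q¹ ≥ q² ≥ 0` (with `q²ᵀ s_i > 0`) implies `γ_i(p¹,q¹) ≤ γ_i(p²,q²)`. -/
theorem stmt11 {n m : ℕ}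
    (s : Fin n → Fin m → ℝ) (hs : ∀ i k, 0 ≤ s i k)
    (x : Fin n → ℝ) (hx : ∀ i, 0 ≤ x i)
    (A : Matrix (Fin n) (Fin n) ℝ) (hA : ∀ i j, 0 ≤ A i j ∧ A i j ≤ 1)
    (pbar : Fin n → ℝ) (hpbar : ∀ i, 0 ≤ pbar i)
    (i : Fin n) (p₁ p₂ : Fin n → ℝ)
    (hp₂0 : ∀ j, 0 ≤ p₂ j) (hp : ∀ j, p₂ j ≤ p₁ j) (hp₁ : ∀ j, p₁ j ≤ pbar j)
    (q₁ q₂ : Fin m → ℝ) (hq₂0 : ∀ k, 0 ≤ q₂ k) (hq : ∀ k, q₂ k ≤ q₁ k)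
    (hq₂s : 0 < ∑ l, q₂ l * s i l) :
    ∀ k, propLiq s x A pbar i p₁ q₁ k ≤ propLiq s x A pbar i p₂ q₂ k := by
  intro k
  unfold propLiq
  set Q₁ := ∑ l, q₁ l * s i l with hQ1
  set Q₂ := ∑ l, q₂ l * s i l with hQ2
  have hQle : Q₂ ≤ Q₁ :=
    Finset.sum_le_sum fun l _ => mul_le_mul_of_nonneg_right (hq l) (hs i l)
  have hQ1pos : 0 < Q₁ := lt_of_lt_of_le hq₂s hQle
  set M₁ := max (pbar i - x i - ATmul A p₁ i) 0 with hM1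
  set M₂ := max (pbar i - x i - ATmul A p₂ i) 0 with hM2
  have hMle : M₁ ≤ M₂ := by
    apply max_le_max _ le_rfl
    have : ATmul A p₂ i ≤ ATmul A p₁ i :=
      Finset.sum_le_sum fun j _ => mul_le_mul_of_nonneg_left (hp j) (hA j i).1
    linarith
  have hM1n : 0 ≤ M₁ := le_max_right _ _
  rw [div_mul_eq_mul_div, div_mul_eq_mul_div, div_le_div_iff₀ hQ1pos hq₂s]
  have key : min Q₁ M₁ * Q₂ ≤ min Q₂ M₂ * Q₁ := by
    rcases le_total Q₁ M₁ with h1 | h1 <;> rcases le_total Q₂ M₂ with h2 | h2 <;>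
      simp [min_eq_left, min_eq_right, h1, h2] <;> nlinarith
  calc s i k * min Q₁ M₁ * Q₂ = s i k * (min Q₁ M₁ * Q₂) := by ring
    _ ≤ s i k * (min Q₂ M₂ * Q₁) := mul_le_mul_of_nonneg_left key (hs i k)
    _ = s i k * min Q₂ M₂ * Q₁ := by ring
end

section
/- The liquidity-adjusted linear inverse demand function F satisfies the monotonicity assumptions — namely F(θ¹,M) ≤ F(θ²,M) whenever θ¹ ≥ θ² ≥ 0 for every M ∈ ℝ^n_+, and F(θ,M¹) ≤ F(θ,M²) whenever 0 ≤ M¹ ≤ M² for every θ ∈ ℝ^m_+ — if and only if C_{kl} ≥ 0 for every pair of assets (k,l). -/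
open Finset

/-- The liquidity-adjusted linear inverse demand function
`F(θ,M) = μ − (1/α₀ + ∑_{i ∈ 𝓜(M)} 1/α_i)⁻¹ C θ`, where `𝓜(M) = {i : M_i > 0}`
is the set of market makers. -/
noncomputable def linF {n m : ℕ} (μ : Fin m → ℝ) (C : Matrix (Fin m) (Fin m) ℝ)
    (α0 : ℝ) (α : Fin n → ℝ) (θ : Fin m → ℝ) (M : Fin n → ℝ) : Fin m → ℝ :=
  fun k => μ k - (1 / α0 + ∑ i ∈ Finset.univ.filter (fun i => 0 < M i), 1 / α i)⁻¹ *
    ∑ l, C k l * θ l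

/-- The liquidity-adjusted linear inverse demand function satisfies the monotonicity
assumptions (nonincreasing in liquidations on `ℝ^m_+`, nondecreasing in market
liquidity on `ℝ^n_+`) if and only if `C_{kl} ≥ 0` for every pair of assets `(k,l)`. -/
theorem stmt12 {n m : ℕ} (hm : 1 ≤ m)
    (μ : Fin m → ℝ) (C : Matrix (Fin m) (Fin m) ℝ)
    (α0 : ℝ) (hα0 : 0 < α0) (α : Fin n → ℝ) (hα : ∀ i, 0 < α i) :
    ((∀ θ₁ θ₂ M, (∀ l, 0 ≤ θ₂ l) → (∀ l, θ₂ l ≤ θ₁ l) → (∀ i, 0 ≤ M i) →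
        ∀ k, linF μ C α0 α θ₁ M k ≤ linF μ C α0 α θ₂ M k) ∧
     (∀ θ M₁ M₂, (∀ l, 0 ≤ θ l) → (∀ i, 0 ≤ M₁ i) → (∀ i, M₁ i ≤ M₂ i) →
        ∀ k, linF μ C α0 α θ M₁ k ≤ linF μ C α0 α θ M₂ k)) ↔
    (∀ k l, 0 ≤ C k l) := by
  have hspos : ∀ M : Fin n → ℝ,
      0 < 1 / α0 + ∑ i ∈ Finset.univ.filter (fun i => 0 < M i), 1 / α i := by
    intro M
    have h1 : 0 < 1 / α0 := by positivity
    have h2 : 0 ≤ ∑ i ∈ Finset.univ.filter (fun i => 0 < M i), 1 / α i :=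
      Finset.sum_nonneg fun i _ => le_of_lt (by have := hα i; positivity)
    linarith
  constructor
  · rintro ⟨h1, _⟩ k l
    have := h1 (fun j => if j = l then 1 else 0) (fun _ => 0) (fun _ => 0)
      (fun _ => le_refl 0) (fun j => by positivity) (fun _ => le_refl 0) k
    simp only [linF, mul_zero, Finset.sum_const_zero, sub_zero, mul_ite, mul_one] at this
    rw [Finset.sum_ite_eq' Finset.univ l (fun j => C k j)] at this
    simp only [Finset.mem_univ, if_true] at this
    have hs := hspos (fun _ : Fin n => (0:ℝ))
    nlinarith [inv_pos.mpr hs]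
  · rintro hC
    constructor
    · intro θ₁ θ₂ M hθ₂ hle hM k
      unfold linF
      have hs := hspos M
      have hsum : ∑ l, C k l * θ₂ l ≤ ∑ l, C k l * θ₁ l :=
        Finset.sum_le_sum fun l _ => mul_le_mul_of_nonneg_left (hle l) (hC k l)
      have := mul_le_mul_of_nonneg_left hsum (le_of_lt (inv_pos.mpr hs))
      linarith
    · intro θ M₁ M₂ hθ hM₁ hle k
      unfold linF
      have hs1 := hspos M₁
      have hs2 := hspos M₂
      have hsub : (Finset.univ.filter (fun i => 0 < M₁ i)) ⊆
          (Finset.univ.filter (fun i => 0 < M₂ i)) := by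
        intro i hi
        simp only [Finset.mem_filter, Finset.mem_univ, true_and] at hi ⊢
        exact lt_of_lt_of_le hi (hle i)
      have hmono : 1 / α0 + ∑ i ∈ Finset.univ.filter (fun i => 0 < M₁ i), 1 / α i ≤
          1 / α0 + ∑ i ∈ Finset.univ.filter (fun i => 0 < M₂ i), 1 / α i := by
        have := Finset.sum_le_sum_of_subset_of_nonneg (f := fun i => 1 / α i) hsub
          (fun i _ _ => le_of_lt (by have := hα i; positivity))
        linarith
      have hinv := inv_anti₀ hs1 hmono
      have hS : 0 ≤ ∑ l, C k l * θ l :=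
        Finset.sum_nonneg fun l _ => mul_nonneg (hC k l) (hθ l)
      have := mul_le_mul_of_nonneg_right hinv hS
      linarith
end

section
/- The two-bank system admits at least two distinct clearing solutions: there exist fixed points (p, q, M) and (p', q', M') of the clearing map Φ, with p, p' ∈ [0,p̄], q, q' ≥ 0, M, M' ≥ 0, such that q ≠ q'. In particular, clearing solutions of this system are not unique. -/
open Finset

/-- Liquid endowments `x = (0, 1/1000)`. -/
noncomputable def x2 : Fin 2 → ℝ := ![0, 1/1000]

/-- Illiquid holdings `s = (2.35, 2)`. -/
noncomputable def s2 : Fin 2 → ℝ := ![2.35, 2]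

/-- Total liabilities `p̄ = (2, 1)`. -/
noncomputable def pbar2 : Fin 2 → ℝ := ![2, 1]

/-- Interbank payments received: `(A^T p)_1 = 0` and `(A^T p)_2 = p_1/2`
(bank 2 receives half of bank 1's payment). -/
noncomputable def ATp2 (p : Fin 2 → ℝ) : Fin 2 → ℝ := ![0, p 0 / 2]

/-- The minimal liquidation rule `γ_i(p,q) = min(s_i, (p̄_i − x_i − (A^T p)_i)^+ / q)`. -/
noncomputable def gamma2 (i : Fin 2) (p : Fin 2 → ℝ) (q : ℝ) : ℝ :=
  min (s2 i) (max (pbar2 i - x2 i - ATp2 p i) 0 / q)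

/-- The inverse demand function `F(θ,M) = 1 − θ/(15 + #{i : M_i > 0})`. -/
noncomputable def F2 (θ : ℝ) (M : Fin 2 → ℝ) : ℝ :=
  1 - θ / (15 + ((Finset.univ.filter fun i => 0 < M i).card : ℝ))

/-- The clearing map of the two-bank system. -/
noncomputable def Phi2 (p : Fin 2 → ℝ) (q : ℝ) (M : Fin 2 → ℝ) :
    (Fin 2 → ℝ) × ℝ × (Fin 2 → ℝ) :=
  (fun i => min (pbar2 i) (x2 i + s2 i * q + ATp2 p i),
   F2 (gamma2 0 p q + gamma2 1 p q) M,
   fun i => max (x2 i + ATp2 p i - pbar2 i) 0)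

set_option maxHeartbeats 2000000 in
/-- The two-bank system admits at least two distinct clearing solutions (with
different clearing prices); in particular, clearing solutions are not unique. -/
theorem stmt15 :
    ∃ (p p' : Fin 2 → ℝ) (q q' : ℝ) (M M' : Fin 2 → ℝ),
      (∀ i, 0 ≤ p i ∧ p i ≤ pbar2 i) ∧ 0 ≤ q ∧ (∀ i, 0 ≤ M i) ∧
      (∀ i, 0 ≤ p' i ∧ p' i ≤ pbar2 i) ∧ 0 ≤ q' ∧ (∀ i, 0 ≤ M' i) ∧
      Phi2 p q M = (p, q, M) ∧ Phi2 p' q' M' = (p', q', M') ∧ q ≠ q' := by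
  have hs2 : Real.sqrt 2 ^ 2 = 2 := Real.sq_sqrt (by norm_num)
  have hsnn : (0:ℝ) ≤ Real.sqrt 2 := Real.sqrt_nonneg 2
  have hsl : (1.414:ℝ) < Real.sqrt 2 := by nlinarith
  have hsu : Real.sqrt 2 < 1.415 := by nlinarith
  have hr2 : Real.sqrt 209905 ^ 2 = 209905 := Real.sq_sqrt (by norm_num)
  have hrnn : (0:ℝ) ≤ Real.sqrt 209905 := Real.sqrt_nonneg _
  have hrl : (458:ℝ) < Real.sqrt 209905 := by nlinarith
  have hru : Real.sqrt 209905 < 459 := by nlinarith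
  set s := Real.sqrt 2
  set r := Real.sqrt 209905
  set q : ℝ := (2 + s) / 4 with hq
  set q' : ℝ := (553 + r) / 1200 with hq'
  have hqpos : 0 < q := by rw [hq]; linarith
  have hq'pos : 0 < q' := by rw [hq']; linarith
  have hql : (0.8535:ℝ) < q := by rw [hq]; linarith
  have hqu : q < 0.85375 := by rw [hq]; linarith
  have hq'l : (0.8425:ℝ) < q' := by rw [hq']; linarith
  have hq'u : q' < 0.84334 := by rw [hq']; linarith
  have hkeyA : 8 * q ^ 2 - 8 * q + 1 = 0 := by rw [hq]; nlinarith
  have hkey : 15000 * q' ^ 2 - 13825 * q' + 999 = 0 := by rw [hq']; nlinarith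
  clear_value s r q q'
  refine ⟨![2, 1], ![(47/20) * q', 1], q, q', ![0, 1/1000], ![0, 0],
    ?_, le_of_lt hqpos, ?_, ?_, le_of_lt hq'pos, ?_, ?_, ?_, ?_⟩
  · intro i; fin_cases i <;> simp [pbar2] <;> norm_num
  · intro i; fin_cases i <;> norm_num
  · intro i; fin_cases i <;> simp [pbar2] <;> constructor <;> linarith
  · intro i; fin_cases i <;> norm_num
  -- first fixed point
  · have hcard : ((Finset.univ.filter fun i => 0 < (![0, 1/1000] : Fin 2 → ℝ) i)) = {1} := by
      ext i; fin_cases i <;> simp <;> norm_num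
    simp only [Phi2, Prod.mk.injEq]
    refine ⟨funext fun i => ?_, ?_, funext fun i => ?_⟩
    · fin_cases i <;> simp [x2, s2, pbar2, ATp2] <;> linarith
    · rw [F2, gamma2, gamma2, hcard]
      simp [x2, s2, pbar2, ATp2]
      rw [min_eq_right (show (2:ℝ)/q ≤ 2.35 by rw [div_le_iff₀ hqpos]; linarith)]
      field_simp
      nlinarith
    · fin_cases i <;> simp [x2, pbar2, ATp2] <;> norm_num
  -- second fixed point
  · have hcard : ((Finset.univ.filter fun i => 0 < (![0, 0] : Fin 2 → ℝ) i)) = ∅ := by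
      ext i; fin_cases i <;> simp
    simp only [Phi2, Prod.mk.injEq]
    refine ⟨funext fun i => ?_, ?_, funext fun i => ?_⟩
    · fin_cases i
      · simp [x2, s2, pbar2, ATp2]
        rw [min_eq_right (show (2.35:ℝ) * q' ≤ 2 by linarith)]
        ring
      · simp [x2, s2, pbar2, ATp2]
        linarith
    · rw [F2, gamma2, gamma2, hcard]
      simp [x2, s2, pbar2, ATp2]
      rw [min_eq_left (show (2.35:ℝ) ≤ 2/q' by rw [le_div_iff₀ hq'pos]; linarith),
          max_eq_left (show (0:ℝ) ≤ 1 - 1000⁻¹ - 47/20 * q'/2 by linarith),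
          min_eq_right (show (1 - 1000⁻¹ - 47/20 * q'/2)/q' ≤ 2 by
            rw [div_le_iff₀ hq'pos]; linarith)]
      field_simp
      nlinarith
    · fin_cases i
      · simp [x2, pbar2, ATp2]
      · simp [x2, pbar2, ATp2]
        linarith
  · intro h; rw [h] at hql; linarith
end
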